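/- Let C be the set of candidates in an election and suppose C = I ∪ J is a partition of C such that (i) x ≥_{3/4} y for all x ∈ I and y ∈ J, and (ii) 0 < |I| ≤ (|J| + 4)/2. Then the candidate ranked first in every 3-wise median of the election belongs to I. -/

import Mathlib

open Finset

/-- A ranking (strict total order) of the finite candidate set `C`, encoded as a
bijection with `Fin (Fintype.card C)`; position `0` is the top of the ranking. -/
abbrev Ranking (C : Type*) [Fintype C] := C ≃ Fin (Fintype.card C)

section Defs

variable {C : Type*} [Fintype C] [DecidableEq C]

/-- `x` is ranked (strictly) before `y` in the ranking `π`. -/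
def Before (π : Ranking C) (x y : C) : Prop := π x < π y

instance (π : Ranking C) (x y : C) : Decidable (Before π x y) :=
  inferInstanceAs (Decidable (π x < π y))

instance : DecidableEq (Ranking C) := fun a b =>
  decidable_of_iff (∀ i, a i = b i) Equiv.ext_iff.symm

/-- The top-ranked element of `S ⊆ C` according to `π` (`⊤` if `S = ∅`). -/
def topS (π : Ranking C) (S : Finset C) : WithTop C :=
  (S.image π).min.map (fun i => π.symm i)

/-- The `k`-wise Kendall-tau distance between two rankings: the number of subsets
`S ⊆ C` with `|S| ≤ k` on whose top element the two rankings disagree (subsets of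
size at most one never contribute). -/
def kDist (k : ℕ) (π σ : Ranking C) : ℕ :=
  ((Finset.univ : Finset C).powerset.filter
    (fun S => S.card ≤ k ∧ topS π S ≠ topS σ S)).card

/-- The `k`-wise Kendall-tau distance from a ranking to a voting profile. -/
def kDistV (k : ℕ) (π : Ranking C) (V : Multiset (Ranking C)) : ℕ :=
  (V.map (fun σ => kDist k π σ)).sum

/-- `π` is a `k`-wise median (for `k = 2`: a Kemeny ranking) of the profile `V`. -/
def IsKMedian (k : ℕ) (V : Multiset (Ranking C)) (π : Ranking C) : Prop :=
  ∀ σ : Ranking C, kDistV k π V ≤ kDistV k σ V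

/-- The number of votes of `V` in which `x` is ranked before `y`. -/
def votesBefore (V : Multiset (Ranking C)) (x y : C) : ℕ :=
  Multiset.card (V.filter (fun v => Before v x y))

/-- `x ≥ₛ y` : `x` is ranked before `y` in at least `s·|V|` of the votes. -/
def AtLeastRatio (V : Multiset (Ranking C)) (s : ℝ) (x y : C) : Prop :=
  s * (Multiset.card V : ℝ) ≤ (votesBefore V x y : ℝ)

/-- `x >ₛ y` : `x` is ranked before `y` in more than `s·|V|` of the votes. -/
def MoreThanRatio (V : Multiset (Ranking C)) (s : ℝ) (x y : C) : Prop :=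
  s * (Multiset.card V : ℝ) < (votesBefore V x y : ℝ)

noncomputable instance (V : Multiset (Ranking C)) (s : ℝ) (x y : C) :
    Decidable (AtLeastRatio V s x y) :=
  inferInstanceAs (Decidable (s * (Multiset.card V : ℝ) ≤ (votesBefore V x y : ℝ)))

/-- `x` is a non-dirty candidate w.r.t. threshold `s`. -/
def NonDirty (V : Multiset (Ranking C)) (s : ℝ) (x : C) : Prop :=
  ∀ y : C, y ≠ x → AtLeastRatio V s x y ∨ AtLeastRatio V s y x

/-- `x` is ranked first (is the winner) in the ranking `π`. -/
def RankedFirst (π : Ranking C) (x : C) : Prop :=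
  ∀ y : C, y ≠ x → Before π x y

instance (π : Ranking C) (x : C) : Decidable (RankedFirst π x) :=
  inferInstanceAs (Decidable (∀ y : C, y ≠ x → Before π x y))

end Defs

section MsAux

variable {α β : Type*}

lemma ms_sum_swap (V : Multiset α) (A : Finset β) (g : β → α → ℕ) :
    (V.map fun σ => ∑ S ∈ A, g S σ).sum = ∑ S ∈ A, (V.map (g S)).sum := by
  induction V using Multiset.induction_on with
  | empty => simp
  | cons a s ih => simp [ih, Finset.sum_add_distrib]

lemma ms_card_filter (V : Multiset α) (p : α → Prop) [DecidablePred p] :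
    (V.map fun σ => if p σ then 1 else 0).sum = Multiset.card (V.filter p) := by
  induction V using Multiset.induction_on with
  | empty => simp
  | cons a s ih => by_cases h : p a <;> simp [Multiset.filter_cons, h, ih] <;> omega

lemma ms_incl_excl (V : Multiset α) (p q : α → Prop) [DecidablePred p] [DecidablePred q] :
    Multiset.card (V.filter p) + Multiset.card (V.filter q) ≤
      Multiset.card (V.filter fun a => p a ∧ q a) + Multiset.card V := by
  induction V using Multiset.induction_on with
  | empty => simp
  | cons a s ih =>
    by_cases h1 : p a <;> by_cases h2 : q a <;>
      simp [Multiset.filter_cons, h1, h2] <;> omega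

lemma ms_filter_mono (V : Multiset α) (p q : α → Prop) [DecidablePred p] [DecidablePred q]
    (h : ∀ a, p a → q a) :
    Multiset.card (V.filter p) ≤ Multiset.card (V.filter q) :=
  Multiset.card_le_card (Multiset.monotone_filter_right V h)

lemma ms_filter_compl (V : Multiset α) (p : α → Prop) [DecidablePred p] :
    Multiset.card (V.filter p) + Multiset.card (V.filter fun a => ¬ p a) = Multiset.card V := by
  rw [← Multiset.card_add, Multiset.filter_add_not]

end MsAux

section FinAux

lemma my_cr_min {n : ℕ} (i j : Fin n) : i.cycleRange i ≤ i.cycleRange j := by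
  cases n with
  | zero => exact i.elim0
  | succ n => rw [Fin.cycleRange_self]; exact Fin.zero_le _

lemma my_cr_lt_iff {n : ℕ} {i j k : Fin n} (hj : j ≠ i) (hk : k ≠ i) :
    i.cycleRange j < i.cycleRange k ↔ j < k := by
  cases n with
  | zero => exact i.elim0
  | succ n =>
    rcases lt_or_gt_of_ne hj with h1 | h1 <;> rcases lt_or_gt_of_ne hk with h2 | h2
    · have a1 := Fin.coe_cycleRange_of_lt h1
      have a2 := Fin.coe_cycleRange_of_lt h2
      simp only [Fin.lt_def, a1, a2] at *
      omega
    · have a1 := Fin.coe_cycleRange_of_lt h1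
      have a2 : ((i.cycleRange k : ℕ)) = k := congrArg Fin.val (Fin.cycleRange_of_gt h2)
      simp only [Fin.lt_def, a1, a2] at *
      omega
    · have a1 : ((i.cycleRange j : ℕ)) = j := congrArg Fin.val (Fin.cycleRange_of_gt h1)
      have a2 := Fin.coe_cycleRange_of_lt h2
      simp only [Fin.lt_def, a1, a2] at *
      omega
    · have a1 : ((i.cycleRange j : ℕ)) = j := congrArg Fin.val (Fin.cycleRange_of_gt h1)
      have a2 : ((i.cycleRange k : ℕ)) = k := congrArg Fin.val (Fin.cycleRange_of_gt h2)
      simp only [Fin.lt_def, a1, a2] at *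

end FinAux
section TopAux

variable {C : Type*} [Fintype C] [DecidableEq C]

lemma topS_empty' (π : Ranking C) : topS π (∅ : Finset C) = ⊤ := by
  simp [topS]

lemma topS_coe_of (π : Ranking C) {S : Finset C} {t : C} (ht : t ∈ S)
    (hmin : ∀ y ∈ S, π t ≤ π y) : topS π S = ↑t := by
  have h1 : (S.image π).min = ↑(π t) := by
    apply le_antisymm
    · exact Finset.min_le (Finset.mem_image_of_mem π ht)
    · apply Finset.le_min
      rintro y hy
      obtain ⟨c, hc, rfl⟩ := Finset.mem_image.mp hy
      exact_mod_cast hmin c hc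
  rw [topS, h1]
  simp

lemma topS_exists (π : Ranking C) {S : Finset C} (hS : S.Nonempty) :
    ∃ t ∈ S, (∀ y ∈ S, π t ≤ π y) ∧ topS π S = ↑t := by
  obtain ⟨t, ht, hmin⟩ := Finset.exists_min_image S (fun c => π c) hS
  exact ⟨t, ht, hmin, topS_coe_of π ht hmin⟩

lemma topS_coe_iff (π : Ranking C) (S : Finset C) (t : C) :
    topS π S = ↑t ↔ t ∈ S ∧ ∀ y ∈ S, π t ≤ π y := by
  constructor
  · intro h
    have hS : S.Nonempty := by
      rcases S.eq_empty_or_nonempty with rfl | h'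
      · rw [topS_empty'] at h; exact absurd h.symm (WithTop.coe_ne_top)
      · exact h'
    obtain ⟨u, hu, humin, htop⟩ := topS_exists π hS
    have : (u : WithTop C) = ↑t := htop ▸ h
    obtain rfl : u = t := by exact_mod_cast this
    exact ⟨hu, humin⟩
  · rintro ⟨ht, hmin⟩
    exact topS_coe_of π ht hmin

lemma votesBefore_add (V : Multiset (Ranking C)) {x y : C} (h : x ≠ y) :
    votesBefore V x y + votesBefore V y x = Multiset.card V := by
  unfold votesBefore
  rw [show (V.filter fun v => Before v y x) = V.filter fun v => ¬ Before v x y from ?_]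
  · exact ms_filter_compl V _
  · apply Multiset.filter_congr
    intro v _
    have hne : v y ≠ v x := (Equiv.injective v).ne (Ne.symm h)
    unfold Before
    constructor
    · intro h1 h2; exact absurd (h1.trans h2) (lt_irrefl _)
    · intro h1; exact (not_lt.mp h1).lt_of_ne hne

lemma ratio_to_nat {V : Multiset (Ranking C)} {x y : C} (h : AtLeastRatio V (3/4) x y) :
    3 * Multiset.card V ≤ 4 * votesBefore V x y := by
  unfold AtLeastRatio at h
  have : (3 : ℝ) * Multiset.card V ≤ 4 * votesBefore V x y := by linarith
  exact_mod_cast this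

/-- `cnt V S ρ` : number of votes disagreeing with `ρ` on the top of `S`. -/
def cnt (V : Multiset (Ranking C)) (S : Finset C) (ρ : Ranking C) : ℕ :=
  Multiset.card (V.filter fun σ => topS ρ S ≠ topS σ S)

lemma cnt_compl (V : Multiset (Ranking C)) (S : Finset C) (ρ : Ranking C) (t : C)
    (h : topS ρ S = ↑t) :
    cnt V S ρ + Multiset.card (V.filter fun σ => topS σ S = (t : WithTop C))
      = Multiset.card V := by
  unfold cnt
  rw [show (V.filter fun σ => topS ρ S ≠ topS σ S)
      = V.filter fun σ => ¬ (topS σ S = (t : WithTop C)) from ?_]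
  · rw [add_comm, ms_filter_compl]
  · apply Multiset.filter_congr
    intro σ _
    rw [h]
    exact ne_comm

lemma kDistV_eq (k : ℕ) (π : Ranking C) (V : Multiset (Ranking C)) :
    kDistV k π V = ∑ S ∈ (Finset.univ : Finset C).powerset.filter (fun S => S.card ≤ k),
      cnt V S π := by
  unfold kDistV
  have hk : ∀ σ : Ranking C, kDist k π σ =
      ∑ S ∈ (Finset.univ : Finset C).powerset.filter (fun S => S.card ≤ k),
        (if topS π S ≠ topS σ S then 1 else 0) := by
    intro σ
    unfold kDist
    rw [← Finset.filter_filter, Finset.card_filter]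
  simp only [hk]
  rw [ms_sum_swap]
  exact Finset.sum_congr rfl fun S _ => ms_card_filter V _

end TopAux
lemma two_choose_two_add (k : ℕ) : 2 * k.choose 2 + k = k * k := by
  induction k with
  | zero => rfl
  | succ n ih =>
    rw [Nat.choose_succ_succ, Nat.choose_one_right]
    zify at ih ⊢
    linear_combination ih
set_option maxHeartbeats 1000000 in
/-- $3/4$-Smith criterion for the 3-wise Kemeny rule: if `C = I ∪ J` is a
partition with `x ≥_{3/4} y` for all `x ∈ I`, `y ∈ J` and `0 < |I| ≤ (|J|+4)/2`, then
the first-ranked candidate of every 3-wise median belongs to `I`. -/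
theorem stmt9 {C : Type*} [Fintype C] [DecidableEq C]
    (V : Multiset (Ranking C)) (hV : V ≠ 0)
    (I J : Finset C) (hdisj : Disjoint I J) (hunion : I ∪ J = Finset.univ)
    (hmaj : ∀ x ∈ I, ∀ y ∈ J, AtLeastRatio V (3 / 4) x y)
    (hI0 : 0 < I.card) (hIJ : (I.card : ℝ) ≤ ((J.card : ℝ) + 4) / 2) :
    ∀ π : Ranking C, IsKMedian 3 V π → ∀ x : C, RankedFirst π x → x ∈ I := by
  intro π hmed x hfirst
  by_contra hxI
  have hIJ' : 2 * I.card ≤ J.card + 4 := by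
    have h : (2 : ℝ) * I.card ≤ J.card + 4 := by linarith
    exact_mod_cast h
  have hxJ : x ∈ J := by
    have hx : x ∈ I ∪ J := hunion ▸ Finset.mem_univ x
    rcases Finset.mem_union.mp hx with h | h
    · exact absurd h hxI
    · exact h
  have hN1 : 1 ≤ Multiset.card V := Multiset.card_pos.mpr hV
  obtain ⟨b, hbI, hbmin⟩ := Finset.exists_min_image I (fun c => π c) (Finset.card_pos.mp hI0)
  have hbJ : b ∉ J := Finset.disjoint_left.mp hdisj hbI
  set N := Multiset.card V with hNdef
  set B := Finset.univ.filter (fun c : C => π c < π b) with hBdef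
  have hBmem : ∀ {c : C}, c ∈ B ↔ π c < π b := by
    intro c; rw [hBdef]; simp
  have hBJ : B ⊆ J := by
    intro c hc
    have hlt := hBmem.mp hc
    have hcI : c ∉ I := fun hcI => absurd hlt (not_lt.mpr (hbmin c hcI))
    have hx : c ∈ I ∪ J := hunion ▸ Finset.mem_univ c
    rcases Finset.mem_union.mp hx with h | h
    · exact absurd h hcI
    · exact h
  have hbx : b ≠ x := fun h => hxI (h ▸ hbI)
  have hxB : x ∈ B := hBmem.mpr (hfirst b hbx)
  set m := B.card with hmdef
  have hm1 : 1 ≤ m := Finset.card_pos.mpr ⟨x, hxB⟩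
  have hmj : m ≤ J.card := Finset.card_le_card hBJ
  -- the modified ranking: move b to the front
  set π' : Ranking C := π.trans (Fin.cycleRange (π b)) with hπ'def
  have hπ'b : ∀ c : C, π' b ≤ π' c := fun c => my_cr_min (π b) (π c)
  have hπ'lt : ∀ {c d : C}, c ≠ b → d ≠ b → (π' c < π' d ↔ π c < π d) := by
    intro c d hc hd
    exact my_cr_lt_iff (π.injective.ne hc) (π.injective.ne hd)
  -- unaffected sets keep their top
  have htop_unaff : ∀ S : Finset C, ¬ (b ∈ S ∧ ∃ c ∈ S, π c < π b) → topS π' S = topS π S := by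
    intro S h
    rcases S.eq_empty_or_nonempty with rfl | hS
    · rw [topS_empty', topS_empty']
    · obtain ⟨t, htS, htmin, htopeq⟩ := topS_exists π hS
      by_cases hb : b ∈ S
      · have htb : t = b := by
          by_contra hne
          exact h ⟨hb, t, htS, (htmin b hb).lt_of_ne (π.injective.ne hne)⟩
        rw [htopeq, htb]
        exact topS_coe_of π' hb (fun y _ => hπ'b y)
      · have htb : t ≠ b := fun h' => hb (h' ▸ htS)
        rw [htopeq]
        apply topS_coe_of π' htS
        intro y hy
        by_cases hyt : y = t
        · subst hyt; exact le_refl _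
        · have hyb : y ≠ b := fun h' => hb (h' ▸ hy)
          have hlt : π t < π y := (htmin y hy).lt_of_ne (π.injective.ne (Ne.symm hyt))
          exact le_of_lt ((hπ'lt htb hyb).mpr hlt)
  -- the vote-count functions
  set E : Finset C → C → ℕ :=
    fun S z => Multiset.card (V.filter fun σ => topS σ S = (z : WithTop C)) with hEdef
  -- core facts for affected sets
  have hcore : ∀ S : Finset C, b ∈ S → ∀ c₀ ∈ S, π c₀ < π b →
      ∃ t, t ∈ B ∧ t ∈ S ∧ t ≠ b ∧ topS π S = ↑t ∧
        cnt V S π + E S t = N ∧ cnt V S π' + E S b = N ∧ 4 * E S t ≤ N := by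
    intro S hb c₀ hc₀ hc₀lt
    obtain ⟨t, htS, htmin, htopeq⟩ := topS_exists π ⟨b, hb⟩
    have htlt : π t < π b := lt_of_le_of_lt (htmin c₀ hc₀) hc₀lt
    have htB : t ∈ B := hBmem.mpr htlt
    have htb : t ≠ b := by
      intro h; rw [h] at htlt; exact lt_irrefl _ htlt
    have h1 : cnt V S π + E S t = N := cnt_compl V S π t htopeq
    have htop' : topS π' S = ↑b := topS_coe_of π' hb (fun y _ => hπ'b y)
    have h2 : cnt V S π' + E S b = N := cnt_compl V S π' b htop'
    have h3 : 4 * E S t ≤ N := by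
      have hmono : E S t ≤ votesBefore V t b := by
        apply ms_filter_mono
        intro σ hσ
        obtain ⟨htS', hmin'⟩ := (topS_coe_iff σ S t).mp hσ
        exact (hmin' b hb).lt_of_ne (σ.injective.ne htb)
      have hv := ratio_to_nat (hmaj b hbI t (hBJ htB))
      have hadd := votesBefore_add V htb
      omega
    exact ⟨t, htB, htS, htb, htopeq, h1, h2, h3⟩
  -- the families of subsets
  set 𝒮 := (Finset.univ : Finset C).powerset.filter (fun S : Finset C => S.card ≤ 3) with h𝒮def
  have hk : ∀ ρ : Ranking C, kDistV 3 ρ V = ∑ S ∈ 𝒮, cnt V S ρ := fun ρ => kDistV_eq 3 ρ V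
  set paff := fun S : Finset C => b ∈ S ∧ ∃ c ∈ S, π c < π b with hpaffdef
  set Aff := 𝒮.filter paff with hAffdef
  set Aff2 := Aff.filter (fun S => S.card = 2) with hAff2def
  set Aff3 := Aff.filter (fun S => ¬ S.card = 2) with hAff3def
  set G3 := Aff3.filter (fun S => S ⊆ insert b J) with hG3def
  set B3 := Aff3.filter (fun S => ¬ S ⊆ insert b J) with hB3def
  -- membership facts for affected sets
  have hAffmem : ∀ S, S ∈ Aff → S.card ≤ 3 ∧ b ∈ S ∧ ∃ c ∈ S, π c < π b := by
    intro S hS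
    obtain ⟨hS1, hS2⟩ := Finset.mem_filter.mp hS
    exact ⟨(Finset.mem_filter.mp hS1).2, hS2⟩
  have hAffcard : ∀ S, S ∈ Aff → 2 ≤ S.card := by
    intro S hS
    obtain ⟨_, hb, c, hc, hlt⟩ := hAffmem S hS
    have hcb : c ≠ b := by intro h; rw [h] at hlt; exact lt_irrefl _ hlt
    exact Finset.one_lt_card.mpr ⟨c, hc, b, hb, hcb⟩
  -- per-class inequalities
  have hP3b : ∀ S ∈ B3, 8 * cnt V S π' ≤ 8 * cnt V S π + 2 * N := by
    intro S hS
    obtain ⟨_, hb, c, hc, hlt⟩ := hAffmem S (Finset.mem_filter.mp (Finset.mem_filter.mp hS).1).1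
    obtain ⟨t, htB, htS, htb, htopeq, h1, h2, h3⟩ := hcore S hb c hc hlt
    omega
  have hP2 : ∀ S ∈ Aff2, 8 * cnt V S π' + 4 * N ≤ 8 * cnt V S π := by
    intro S hS
    have hSA : S ∈ Aff := (Finset.mem_filter.mp hS).1
    have hcard2 : S.card = 2 := (Finset.mem_filter.mp hS).2
    obtain ⟨_, hb, c, hc, hlt⟩ := hAffmem S hSA
    obtain ⟨t, htB, htS, htb, htopeq, h1, h2, h3⟩ := hcore S hb c hc hlt
    have hbt : b ≠ t := Ne.symm htb
    have hSeq : ({b, t} : Finset C) = S := by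
      apply Finset.eq_of_subset_of_card_le
      · intro y hy
        simp only [Finset.mem_insert, Finset.mem_singleton] at hy
        rcases hy with rfl | rfl
        · exact hb
        · exact htS
      · rw [hcard2, Finset.card_pair hbt]
    have hEb : votesBefore V b t ≤ E S b := by
      apply ms_filter_mono
      intro σ hσ
      apply (topS_coe_iff σ S b).mpr
      refine ⟨hb, ?_⟩
      intro y hy
      rw [← hSeq] at hy
      simp only [Finset.mem_insert, Finset.mem_singleton] at hy
      rcases hy with rfl | rfl
      · exact le_refl _
      · exact le_of_lt hσ
    have hv := ratio_to_nat (hmaj b hbI t (hBJ htB))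
    have hadd := votesBefore_add V hbt
    omega
  have hP3g : ∀ S ∈ G3, 8 * cnt V S π' + 2 * N ≤ 8 * cnt V S π := by
    intro S hS
    have hSA3 : S ∈ Aff3 := (Finset.mem_filter.mp hS).1
    have hsubJ : S ⊆ insert b J := (Finset.mem_filter.mp hS).2
    have hSA : S ∈ Aff := (Finset.mem_filter.mp hSA3).1
    have hn2 : ¬ S.card = 2 := (Finset.mem_filter.mp hSA3).2
    obtain ⟨hle3, hb, c, hc, hlt⟩ := hAffmem S hSA
    obtain ⟨t, htB, htS, htb, htopeq, h1, h2, h3⟩ := hcore S hb c hc hlt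
    have hcard3 : S.card = 3 := by have := hAffcard S hSA; omega
    have herase : (S.erase b).card = 2 := by rw [Finset.card_erase_of_mem hb, hcard3]
    obtain ⟨u, w, huw, heq⟩ := Finset.card_eq_two.mp herase
    have hu : u ≠ b ∧ u ∈ S := by
      have hh : u ∈ S.erase b := by rw [heq]; exact Finset.mem_insert_self _ _
      exact Finset.mem_erase.mp hh
    have hw : w ≠ b ∧ w ∈ S := by
      have hh : w ∈ S.erase b := by
        rw [heq]; exact Finset.mem_insert_of_mem (Finset.mem_singleton_self _)
      exact Finset.mem_erase.mp hh
    have hSins : S = insert b ({u, w} : Finset C) := by rw [← heq, Finset.insert_erase hb]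
    have huJ : u ∈ J := by
      rcases Finset.mem_insert.mp (hsubJ hu.2) with h | h
      · exact absurd h hu.1
      · exact h
    have hwJ : w ∈ J := by
      rcases Finset.mem_insert.mp (hsubJ hw.2) with h | h
      · exact absurd h hw.1
      · exact h
    have hand : votesBefore V b u + votesBefore V b w ≤ E S b + N := by
      have h5 : Multiset.card (V.filter fun σ => Before σ b u ∧ Before σ b w) ≤ E S b := by
        apply ms_filter_mono
        rintro σ ⟨hA, hB2⟩
        apply (topS_coe_iff σ S b).mpr
        refine ⟨hb, ?_⟩
        intro y hy
        rw [hSins] at hy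
        simp only [Finset.mem_insert, Finset.mem_singleton] at hy
        rcases hy with rfl | rfl | rfl
        · exact le_refl _
        · exact le_of_lt hA
        · exact le_of_lt hB2
      have h6 := ms_incl_excl V (fun σ => Before σ b u) (fun σ => Before σ b w)
      have e1 : votesBefore V b u = Multiset.card (V.filter fun σ => Before σ b u) := rfl
      have e2 : votesBefore V b w = Multiset.card (V.filter fun σ => Before σ b w) := rfl
      omega
    have hvu := ratio_to_nat (hmaj b hbI u huJ)
    have hvw := ratio_to_nat (hmaj b hbI w hwJ)
    omega
  -- counting
  have hc2 : m ≤ Aff2.card := by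
    rw [hmdef]
    apply Finset.card_le_card_of_injOn (fun c => ({b, c} : Finset C))
    · intro c hc
      have hlt := hBmem.mp hc
      have hcb : c ≠ b := by intro h; rw [h] at hlt; exact lt_irrefl _ hlt
      have hbc : b ≠ c := Ne.symm hcb
      apply Finset.mem_filter.mpr
      constructor
      · apply Finset.mem_filter.mpr
        constructor
        · apply Finset.mem_filter.mpr
          refine ⟨Finset.mem_powerset.mpr (Finset.subset_univ _), ?_⟩
          rw [Finset.card_pair hbc]
          omega
        · exact ⟨Finset.mem_insert_self _ _, c, by simp, hlt⟩
      · exact Finset.card_pair hbc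
    · intro c hc c' hc' heq
      have heq' : ({b, c} : Finset C) = {b, c'} := heq
      have h1 : c' ∈ ({b, c} : Finset C) := by rw [heq']; simp
      have hlt' := hBmem.mp (Finset.mem_coe.mp hc')
      have hc'b : c' ≠ b := by intro h; rw [h] at hlt'; exact lt_irrefl _ hlt'
      simp only [Finset.mem_insert, Finset.mem_singleton] at h1
      rcases h1 with h1 | h1
      · exact absurd h1 hc'b
      · exact h1.symm ▸ rfl
  set P2J := (J.powersetCard 2).filter (fun S' => ∃ c ∈ S', π c < π b) with hP2Jdef
  have hc3g : P2J.card ≤ G3.card := by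
    apply Finset.card_le_card_of_injOn (fun S' => insert b S')
    · intro S' hS'
      obtain ⟨hmem2, c, hcS', hclt⟩ := Finset.mem_filter.mp hS'
      obtain ⟨hsub, hcard⟩ := Finset.mem_powersetCard.mp hmem2
      have hbS' : b ∉ S' := fun h => hbJ (hsub h)
      have hcards : (insert b S').card = 3 := by
        rw [Finset.card_insert_of_notMem hbS', hcard]
      apply Finset.mem_filter.mpr
      refine ⟨?_, Finset.insert_subset_insert _ hsub⟩
      apply Finset.mem_filter.mpr
      refine ⟨?_, by beta_reduce; omega⟩
      apply Finset.mem_filter.mpr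
      refine ⟨?_, ?_⟩
      · apply Finset.mem_filter.mpr
        refine ⟨Finset.mem_powerset.mpr (Finset.subset_univ _), by beta_reduce; omega⟩
      · exact ⟨Finset.mem_insert_self _ _, c, Finset.mem_insert_of_mem hcS', hclt⟩
    · intro S1 h1 S2 h2 heq
      obtain ⟨hmem1, _⟩ := Finset.mem_filter.mp (Finset.mem_coe.mp h1)
      obtain ⟨hmem2', _⟩ := Finset.mem_filter.mp (Finset.mem_coe.mp h2)
      have hb1 : b ∉ S1 := fun h => hbJ ((Finset.mem_powersetCard.mp hmem1).1 h)
      have hb2 : b ∉ S2 := fun h => hbJ ((Finset.mem_powersetCard.mp hmem2').1 h)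
      have hcongr := congrArg (fun T : Finset C => T.erase b) heq
      simpa [Finset.erase_insert hb1, Finset.erase_insert hb2] using hcongr
  have hg0eq : P2J.card + ((J.card - m).choose 2) = J.card.choose 2 := by
    have hsplit2 : (J.powersetCard 2).filter (fun S' => ¬ ∃ c ∈ S', π c < π b)
        = (J \ B).powersetCard 2 := by
      ext S'
      constructor
      · intro h
        obtain ⟨h1, h2⟩ := Finset.mem_filter.mp h
        obtain ⟨hsub, hcard⟩ := Finset.mem_powersetCard.mp h1
        apply Finset.mem_powersetCard.mpr
        refine ⟨?_, hcard⟩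
        intro y hy
        apply Finset.mem_sdiff.mpr
        refine ⟨hsub hy, ?_⟩
        intro hyB
        exact h2 ⟨y, hy, hBmem.mp hyB⟩
      · intro h
        obtain ⟨hsub, hcard⟩ := Finset.mem_powersetCard.mp h
        apply Finset.mem_filter.mpr
        constructor
        · exact Finset.mem_powersetCard.mpr ⟨fun y hy => (Finset.mem_sdiff.mp (hsub hy)).1, hcard⟩
        · rintro ⟨c, hcS', hclt⟩
          exact (Finset.mem_sdiff.mp (hsub hcS')).2 (hBmem.mpr hclt)
    have hJB : (J \ B).card = J.card - m := by rw [Finset.card_sdiff_of_subset hBJ]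
    have htot := Finset.card_filter_add_card_filter_not
      (s := J.powersetCard 2) (p := fun S' => ∃ c ∈ S', π c < π b)
    have hcc : ((J.powersetCard 2).filter (fun S' => ¬ ∃ c ∈ S', π c < π b)).card
        = (J.card - m).choose 2 := by
      rw [hsplit2, Finset.card_powersetCard, hJB]
    have hcards1 : (J.powersetCard 2).card = J.card.choose 2 := Finset.card_powersetCard 2 J
    rw [hcc, hcards1] at htot
    exact htot
  have hc3b : B3.card ≤ m * (I.card - 1) := by
    have hsub : B3 ⊆ Finset.image (fun p : C × C => ({b, p.1, p.2} : Finset C))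
        (B ×ˢ (I.erase b)) := by
      intro S hS
      have hSA3 := (Finset.mem_filter.mp hS).1
      have hnsub : ¬ S ⊆ insert b J := (Finset.mem_filter.mp hS).2
      have hSA : S ∈ Aff := (Finset.mem_filter.mp hSA3).1
      have hn2 : ¬ S.card = 2 := (Finset.mem_filter.mp hSA3).2
      obtain ⟨hle3, hb, c, hcS, hclt⟩ := hAffmem S hSA
      have hcard3 : S.card = 3 := by have := hAffcard S hSA; omega
      obtain ⟨d, hdS, hd⟩ := Finset.not_subset.mp hnsub
      have hdb : d ≠ b := fun h => hd (h ▸ Finset.mem_insert_self b J)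
      have hdJ : d ∉ J := fun h => hd (Finset.mem_insert_of_mem h)
      have hdI : d ∈ I := by
        have hx : d ∈ I ∪ J := hunion ▸ Finset.mem_univ d
        rcases Finset.mem_union.mp hx with h | h
        · exact h
        · exact absurd h hdJ
      have hcB : c ∈ B := hBmem.mpr hclt
      have hcb : c ≠ b := by intro h; rw [h] at hclt; exact lt_irrefl _ hclt
      have hcd : c ≠ d := fun h => hdJ (h ▸ hBJ hcB)
      have hsub2 : ({b, c, d} : Finset C) ⊆ S := by
        intro y hy
        simp only [Finset.mem_insert, Finset.mem_singleton] at hy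
        rcases hy with rfl | rfl | rfl
        · exact hb
        · exact hcS
        · exact hdS
      have hbcd : b ∉ ({c, d} : Finset C) := by
        simp [Ne.symm hcb, Ne.symm hdb]
      have hcard' : ({b, c, d} : Finset C).card = 3 := by
        rw [Finset.card_insert_of_notMem hbcd, Finset.card_pair hcd]
      have hSeq : ({b, c, d} : Finset C) = S :=
        Finset.eq_of_subset_of_card_le hsub2 (by omega)
      exact Finset.mem_image.mpr
        ⟨(c, d), Finset.mem_product.mpr ⟨hcB, Finset.mem_erase.mpr ⟨hdb, hdI⟩⟩, hSeq⟩
    calc B3.card ≤ _ := Finset.card_le_card hsub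
      _ ≤ (B ×ˢ (I.erase b)).card := Finset.card_image_le
      _ = m * (I.card - 1) := by rw [Finset.card_product, Finset.card_erase_of_mem hbI]
  -- the key counting inequality
  have hcount : m + 2 * B3.card ≤ 4 * Aff2.card + 2 * G3.card := by
    have hq : (J.card - m) + m = J.card := by omega
    have h2i : 2 * (I.card - 1) ≤ (J.card - m) + m + 2 := by omega
    have hkeyN : m * (2 * (I.card - 1)) ≤ m * ((J.card - m) + m + 2) :=
      Nat.mul_le_mul_left m h2i
    have e1 := two_choose_two_add J.card
    have e2 := two_choose_two_add (J.card - m)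
    have hqz : ((J.card - m : ℕ) : ℤ) + (m : ℤ) = (J.card : ℤ) := by exact_mod_cast hq
    zify at hc2 hc3g hc3b hg0eq e1 e2 hkeyN ⊢
    rw [← hqz] at e1
    nlinarith [hc2, hc3g, hc3b, hg0eq, e1, e2, hkeyN,
      mul_nonneg (by positivity : (0:ℤ) ≤ ((J.card - m : ℕ) : ℤ)) (by positivity : (0:ℤ) ≤ (m:ℤ))]
  -- summation
  have hsum2 : 8 * (∑ S ∈ Aff2, cnt V S π') + (Aff2.card) * (4 * N) ≤ 8 * ∑ S ∈ Aff2, cnt V S π := by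
    calc 8 * (∑ S ∈ Aff2, cnt V S π') + (Aff2.card) * (4 * N)
        = ∑ S ∈ Aff2, (8 * cnt V S π' + 4 * N) := by
          rw [Finset.sum_add_distrib, Finset.sum_const, Finset.mul_sum, smul_eq_mul]
      _ ≤ ∑ S ∈ Aff2, 8 * cnt V S π := Finset.sum_le_sum hP2
      _ = 8 * ∑ S ∈ Aff2, cnt V S π := (Finset.mul_sum _ _ _).symm
  have hsumg : 8 * (∑ S ∈ G3, cnt V S π') + (G3.card) * (2 * N) ≤ 8 * ∑ S ∈ G3, cnt V S π := by
    calc 8 * (∑ S ∈ G3, cnt V S π') + (G3.card) * (2 * N)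
        = ∑ S ∈ G3, (8 * cnt V S π' + 2 * N) := by
          rw [Finset.sum_add_distrib, Finset.sum_const, Finset.mul_sum, smul_eq_mul]
      _ ≤ ∑ S ∈ G3, 8 * cnt V S π := Finset.sum_le_sum hP3g
      _ = 8 * ∑ S ∈ G3, cnt V S π := (Finset.mul_sum _ _ _).symm
  have hsumb : 8 * (∑ S ∈ B3, cnt V S π') ≤ 8 * (∑ S ∈ B3, cnt V S π) + (B3.card) * (2 * N) := by
    calc 8 * (∑ S ∈ B3, cnt V S π') = ∑ S ∈ B3, 8 * cnt V S π' := Finset.mul_sum _ _ _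
      _ ≤ ∑ S ∈ B3, (8 * cnt V S π + 2 * N) := Finset.sum_le_sum hP3b
      _ = 8 * (∑ S ∈ B3, cnt V S π) + (B3.card) * (2 * N) := by
          rw [Finset.sum_add_distrib, Finset.sum_const, Finset.mul_sum, smul_eq_mul]
  -- decomposition of the total sums
  have hdecomp : ∀ ρ : Ranking C, ∑ S ∈ 𝒮, cnt V S ρ =
      (∑ S ∈ 𝒮.filter (fun S => ¬ paff S), cnt V S ρ)
      + ((∑ S ∈ Aff2, cnt V S ρ) + ((∑ S ∈ G3, cnt V S ρ) + ∑ S ∈ B3, cnt V S ρ)) := by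
    intro ρ
    rw [hG3def, hB3def, Finset.sum_filter_add_sum_filter_not Aff3 _ (fun S => cnt V S ρ)]
    rw [hAff2def, hAff3def, Finset.sum_filter_add_sum_filter_not Aff _ (fun S => cnt V S ρ)]
    rw [hAffdef, add_comm]
    exact (Finset.sum_filter_add_sum_filter_not 𝒮 paff (fun S => cnt V S ρ)).symm
  have hunaffeq : ∑ S ∈ 𝒮.filter (fun S => ¬ paff S), cnt V S π'
      = ∑ S ∈ 𝒮.filter (fun S => ¬ paff S), cnt V S π := by
    apply Finset.sum_congr rfl
    intro S hS
    have h := (Finset.mem_filter.mp hS).2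
    unfold cnt
    rw [htop_unaff S h]
  -- final combination
  have hfinal : 8 * kDistV 3 π' V + m * N ≤ 8 * kDistV 3 π V := by
    rw [hk π', hk π, hdecomp π', hdecomp π, hunaffeq]
    have hmul := Nat.mul_le_mul_right N hcount
    zify at hsum2 hsumg hsumb hmul ⊢
    linarith [hsum2, hsumg, hsumb, hmul]
  have hcontra := hmed π'
  have hmN : 1 ≤ m * N := by calc 1 = 1 * 1 := rfl
    _ ≤ m * N := Nat.mul_le_mul hm1 hN1
  omega
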